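/- Let A ⊆ F_p with 2 ≤ |A| < p^{1/2}. Suppose there exist A₁ ⊆ A, b₀ ∈ A, and N ≥ 1 with |b₀A ∩ aA| ≥ N for all a ∈ A₁, and suppose (A₁-A₁)/(A₁-A₁) ≠ F_p. Then |A₁|³ N⁴ |A|³ ≤ C · |A+A|⁹ for an absolute constant C. -/

import Mathlib

open Finset Pointwise

section Helpers

variable {K : Type*} [Field K] [DecidableEq K]

lemma my_card_smul {c : K} (hc : c ≠ 0) (s : Finset K) : #(c • s) = #s := by
  rw [Finset.smul_finset_def]
  exact Finset.card_image_of_injective _ (fun x y h => by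
    simpa using mul_left_cancel₀ hc (by simpa [smul_eq_mul] using h))

lemma my_smul_add (c : K) (s t : Finset K) : c • (s + t) = c • s + c • t := by
  have h : ∀ u : Finset K, c • u = u.image (⇑(AddMonoidHom.mulLeft c)) := fun u => by
    rw [Finset.smul_finset_def]
    simp [AddMonoidHom.mulLeft, smul_eq_mul]
  rw [h, h, h, Finset.image_add]

lemma my_smul_sub (c : K) (s t : Finset K) : c • (s - t) = c • s - c • t := by
  rw [sub_eq_add_neg, my_smul_add, smul_finset_neg, ← sub_eq_add_neg]

end Helpers

section ProdAdd

variable {G H : Type*} [DecidableEq G] [DecidableEq H] [Add G] [Add H]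

lemma my_prod_add_prod (s u : Finset G) (t v : Finset H) :
    (s ×ˢ t) + (u ×ˢ v) = (s + u) ×ˢ (t + v) := by
  ext ⟨a, b⟩
  simp only [Finset.mem_add, Finset.mem_product]
  constructor
  · rintro ⟨x, hx, y, hy, hxy⟩
    rw [Prod.ext_iff] at hxy
    exact ⟨⟨x.1, hx.1, y.1, hy.1, by simpa using hxy.1⟩,
           ⟨x.2, hx.2, y.2, hy.2, by simpa using hxy.2⟩⟩
  · rintro ⟨⟨a₁, ha₁, a₂, ha₂, rfl⟩, ⟨b₁, hb₁, b₂, hb₂, rfl⟩⟩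
    exact ⟨(a₁, b₁), ⟨ha₁, hb₁⟩, (a₂, b₂), ⟨ha₂, hb₂⟩, rfl⟩

end ProdAdd


lemma my_same_summand {G : Type*} [AddCommGroup G] [DecidableEq G] (S B : Finset G)
    (hS : S.Nonempty) :
    ∃ X ⊆ S, X.Nonempty ∧ #(X + B + B) * #S ^ 2 ≤ #X * #(S + B) ^ 2 := by
  have hS' : S ∈ S.powerset.erase ∅ :=
    Finset.mem_erase_of_ne_of_mem hS.ne_empty (Finset.mem_powerset_self _)
  obtain ⟨X, hX, hmin⟩ := Finset.exists_min_image (S.powerset.erase ∅)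
    (fun X => (#(X + B) : ℚ≥0) / #X) ⟨S, hS'⟩
  rw [Finset.mem_erase, Finset.mem_powerset, ← Finset.nonempty_iff_ne_empty] at hX
  obtain ⟨hXne, hXS⟩ := hX
  have hX0 : 0 < #X := hXne.card_pos
  refine ⟨X, hXS, hXne, ?_⟩
  -- Petridis hypothesis
  have hyp : ∀ X' ⊆ X, #(X + B) * #X' ≤ #(X' + B) * #X := by
    intro X' hX'
    rcases X'.eq_empty_or_nonempty with rfl | hX'ne
    · simp
    have h := hmin X' (Finset.mem_erase_of_ne_of_mem hX'ne.ne_empty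
      (Finset.mem_powerset.2 (hX'.trans hXS)))
    have h1 : (0 : ℚ≥0) < #X := by exact_mod_cast hX0
    have h2 : (0 : ℚ≥0) < #X' := by exact_mod_cast hX'ne.card_pos
    exact_mod_cast (div_le_div_iff₀ h1 h2).1 h
  have h1 : #(X + B + B) * #X ≤ #(X + B) * #(X + B) := by
    have := Finset.pluennecke_petridis_inequality_add B hyp
    rwa [add_comm B X] at this
  have h2 : #(X + B) * #S ≤ #(S + B) * #X := by
    have h := hmin S hS'
    have h1' : (0 : ℚ≥0) < #X := by exact_mod_cast hX0
    have h2' : (0 : ℚ≥0) < #S := by exact_mod_cast hS.card_pos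
    exact_mod_cast (div_le_div_iff₀ h1' h2').1 h
  have key : (#(X + B + B) * #S ^ 2) * #X ≤ (#X * #(S + B) ^ 2) * #X := by
    calc (#(X + B + B) * #S ^ 2) * #X = (#(X + B + B) * #X) * #S ^ 2 := by ring
    _ ≤ (#(X + B) * #(X + B)) * #S ^ 2 := Nat.mul_le_mul_right _ h1
    _ = (#(X + B) * #S) * (#(X + B) * #S) := by ring
    _ ≤ (#(S + B) * #X) * (#(S + B) * #X) := Nat.mul_le_mul h2 h2
    _ = (#X * #(S + B) ^ 2) * #X := by ring
  exact Nat.le_of_mul_le_mul_right key hX0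

lemma my_diff_summands_aux {G : Type*} [AddCommGroup G] [DecidableEq G] (S B₁ B₂ : Finset G)
    (hS : S.Nonempty) (hB₁ : B₁.Nonempty) (hB₂ : B₂.Nonempty)
    (hhk : #(S + B₁) ≤ #(S + B₂)) :
    ∃ X ⊆ S, X.Nonempty ∧ #(X + B₁ + B₂) * #S ^ 2 ≤ 9 * #X * (#(S + B₁) * #(S + B₂)) := by
  classical
  set h := #(S + B₁) with hh
  set k := #(S + B₂) with hk
  have h0 : 0 < h := Finset.Nonempty.card_pos (hS.add hB₁)
  have k0 : 0 < k := Finset.Nonempty.card_pos (hS.add hB₂)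
  set f : ℕ := k / h + 1 with hf
  have f0 : 0 < f := Nat.succ_pos _
  -- levels
  set I : Finset ℤ := (Finset.range f).image ((↑) : ℕ → ℤ) with hI
  have hIcard : #I = f := by
    rw [hI, Finset.card_image_of_injective _ Nat.cast_injective, Finset.card_range]
  set f' : ℤ := (f : ℤ) with hf'
  set S' : Finset (G × ℤ) := S ×ˢ ({0} : Finset ℤ) with hS'def
  set B' : Finset (G × ℤ) := (B₁ ×ˢ I) ∪ (B₂ ×ˢ ({f'} : Finset ℤ)) with hB'def
  have hS'ne : S'.Nonempty := hS.product (Finset.singleton_nonempty _)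
  have hS'card : #S' = #S := by rw [hS'def, Finset.card_product, Finset.card_singleton, mul_one]
  have hzeroI : ({0} : Finset ℤ) + I = I := by
    rw [Finset.singleton_add]
    simp
  have hzerof : ({0} : Finset ℤ) + ({f'} : Finset ℤ) = {f'} := by
    rw [Finset.singleton_add_singleton, zero_add]
  have hSB' : #(S' + B') ≤ f * h + k := by
    have : S' + B' = ((S + B₁) ×ˢ I) ∪ ((S + B₂) ×ˢ ({f'} : Finset ℤ)) := by
      rw [hS'def, hB'def, Finset.add_union, my_prod_add_prod, my_prod_add_prod, hzeroI, hzerof]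
    rw [this]
    refine (Finset.card_union_le _ _).trans ?_
    rw [Finset.card_product, Finset.card_product, hIcard, Finset.card_singleton, mul_one]
    rw [mul_comm]
  obtain ⟨X', hX'S, hX'ne, hX'⟩ := my_same_summand S' B' hS'ne
  set X : Finset G := X'.image Prod.fst with hXdef
  have hX'eq : X' = X ×ˢ ({0} : Finset ℤ) := by
    ext ⟨a, b⟩
    simp only [hXdef, Finset.mem_product, Finset.mem_image, Finset.mem_singleton]
    constructor
    · intro hab
      have hmem := hX'S hab
      rw [hS'def, Finset.mem_product, Finset.mem_singleton] at hmem
      exact ⟨⟨(a, b), hab, rfl⟩, hmem.2⟩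
    · rintro ⟨⟨⟨a', b'⟩, hq, hq1⟩, rfl⟩
      have hmem := hX'S hq
      rw [hS'def, Finset.mem_product, Finset.mem_singleton] at hmem
      cases hq1
      have hb : b' = 0 := hmem.2
      subst hb
      exact hq
  have hXS : X ⊆ S := by
    intro a ha
    rw [hXdef, Finset.mem_image] at ha
    obtain ⟨q, hq, rfl⟩ := ha
    exact (Finset.mem_product.1 (hX'S hq)).1
  have hXne : X.Nonempty := hX'ne.image _
  have hXcard : #X' = #X := by rw [hX'eq, Finset.card_product, Finset.card_singleton, mul_one]
  -- lower bound on X' + B' + B'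
  have hlow : #(X + B₁ + B₂) * f ≤ #(X' + B' + B') := by
    have hsub : (X + B₁ + B₂) ×ˢ ((({0} : Finset ℤ) + I) + ({f'} : Finset ℤ)) ⊆ X' + B' + B' := by
      rw [← my_prod_add_prod, ← my_prod_add_prod, ← hX'eq]
      refine Finset.add_subset_add ?_ ?_
      · exact Finset.add_subset_add_left Finset.subset_union_left
      · exact Finset.subset_union_right
    have hcard : #((X + B₁ + B₂) ×ˢ ((({0} : Finset ℤ) + I) + ({f'} : Finset ℤ)))
        = #(X + B₁ + B₂) * f := by
      rw [Finset.card_product, hzeroI]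
      congr 1
      rw [Finset.add_singleton, Finset.card_vadd_finset]
      exact hIcard
    rw [← hcard]
    exact Finset.card_le_card hsub
  -- arithmetic
  refine ⟨X, hXS, hXne, ?_⟩
  have key : (#(X + B₁ + B₂) * #S ^ 2) * f ≤ (9 * #X * (h * k)) * f := by
    have c1 : (#(X + B₁ + B₂) * #S ^ 2) * f ≤ #X * (f * h + k) ^ 2 := by
      calc (#(X + B₁ + B₂) * #S ^ 2) * f = (#(X + B₁ + B₂) * f) * #S ^ 2 := by ring
      _ ≤ #(X' + B' + B') * #S ^ 2 := Nat.mul_le_mul_right _ hlow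
      _ = #(X' + B' + B') * #S' ^ 2 := by rw [hS'card]
      _ ≤ #X' * #(S' + B') ^ 2 := hX'
      _ ≤ #X' * (f * h + k) ^ 2 := Nat.mul_le_mul_left _ (Nat.pow_le_pow_left hSB' 2)
      _ = #X * (f * h + k) ^ 2 := by rw [hXcard]
    have hkfh : k ≤ f * h := by
      have h1 : h * (k / h) + k % h = k := Nat.div_add_mod k h
      have h2 : k % h < h := Nat.mod_lt _ h0
      have h3 : f * h = h * (k / h) + h := by rw [hf]; ring
      omega
    have hfh2k : f * h ≤ 2 * k := by
      have h1 : k / h * h ≤ k := Nat.div_mul_le_self k h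
      have h3 : f * h = k / h * h + h := by rw [hf]; ring
      omega
    have c2 : (f * h + k) ^ 2 ≤ 9 * (h * k) * f := by
      calc (f * h + k) ^ 2 ≤ (3 * k) ^ 2 := Nat.pow_le_pow_left (by omega) 2
      _ = 9 * (k * k) := by ring
      _ ≤ 9 * (k * (f * h)) := by
          exact Nat.mul_le_mul_left _ (Nat.mul_le_mul_left _ hkfh)
      _ = 9 * (h * k) * f := by ring
    calc (#(X + B₁ + B₂) * #S ^ 2) * f ≤ #X * (f * h + k) ^ 2 := c1
    _ ≤ #X * (9 * (h * k) * f) := Nat.mul_le_mul_left _ c2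
    _ = (9 * #X * (h * k)) * f := by ring
  exact Nat.le_of_mul_le_mul_right key f0

lemma my_diff_summands {G : Type*} [AddCommGroup G] [DecidableEq G] (S B₁ B₂ : Finset G)
    (hS : S.Nonempty) (hB₁ : B₁.Nonempty) (hB₂ : B₂.Nonempty) :
    ∃ X ⊆ S, X.Nonempty ∧ #(X + B₁ + B₂) * #S ^ 2 ≤ 9 * #X * (#(S + B₁) * #(S + B₂)) := by
  rcases le_total #(S + B₁) #(S + B₂) with hle | hle
  · exact my_diff_summands_aux S B₁ B₂ hS hB₁ hB₂ hle
  · obtain ⟨X, hXS, hXne, hX⟩ := my_diff_summands_aux S B₂ B₁ hS hB₂ hB₁ hle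
    refine ⟨X, hXS, hXne, ?_⟩
    rw [add_right_comm] at hX
    calc #(X + B₁ + B₂) * #S ^ 2 ≤ 9 * #X * (#(S + B₂) * #(S + B₁)) := hX
    _ = 9 * #X * (#(S + B₁) * #(S + B₂)) := by ring

theorem garaev_second_case :
    ∃ C : ℝ, 0 < C ∧
      ∀ (p : ℕ) [Fact p.Prime], ∀ (A A₁ : Finset (ZMod p)) (b₀ : ZMod p) (N : ℕ),
        2 ≤ A.card → A.card ^ 2 < p → (0 : ZMod p) ∉ A →
        A₁ ⊆ A → 1 < A₁.card → b₀ ∈ A → 1 ≤ N →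
        (∀ a ∈ A₁, N ≤ (b₀ • A ∩ a • A).card) →
        {r : ZMod p | ∃ x ∈ A₁, ∃ y ∈ A₁, ∃ z ∈ A₁, ∃ w ∈ A₁,
          z ≠ w ∧ r = (x - y) / (z - w)} ≠ Set.univ →
        (A₁.card : ℝ) ^ 3 * (N : ℝ) ^ 4 * (A.card : ℝ) ^ 3 ≤ C * (A + A).card ^ 9 := by
  classical
  refine ⟨9, by norm_num, ?_⟩
  intro p hpI A A₁ b₀ N hA2 hpA hA0 hA₁A hA₁2 hb₀A hN1 hN hR
  haveI : NeZero p := ⟨hpI.out.ne_zero⟩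
  set R : Set (ZMod p) := {r : ZMod p | ∃ x ∈ A₁, ∃ y ∈ A₁, ∃ z ∈ A₁, ∃ w ∈ A₁,
      z ≠ w ∧ r = (x - y) / (z - w)} with hRdef
  have hAne : A.Nonempty := Finset.card_pos.1 (by omega)
  have hA₁ne : A₁.Nonempty := Finset.card_pos.1 (by omega)
  have hb₀0 : b₀ ≠ 0 := fun h => hA0 (h ▸ hb₀A)
  -- two distinct elements of A₁
  obtain ⟨u₀, hu₀, v₀, hv₀, huv⟩ := Finset.one_lt_card.1 hA₁2
  have h1R : (1 : ZMod p) ∈ R :=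
    ⟨u₀, hu₀, v₀, hv₀, u₀, hu₀, v₀, hv₀, huv, (div_self (sub_ne_zero.2 huv)).symm⟩
  have h0R : (0 : ZMod p) ∈ R :=
    ⟨u₀, hu₀, u₀, hu₀, u₀, hu₀, v₀, hv₀, huv, by simp⟩
  -- select ξ with ξ ∈ R, 1 + ξ ∉ R
  have hstep : ∃ ξ ∈ R, (1 + ξ) ∉ R := by
    by_contra hcon
    push_neg at hcon
    have hnat : ∀ n : ℕ, ((n : ℕ) : ZMod p) ∈ R := by
      intro n
      induction n with
      | zero => simpa using h0R
      | succ n ih =>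
          have := hcon _ ih
          have hcast : (((n + 1 : ℕ)) : ZMod p) = 1 + ((n : ℕ) : ZMod p) := by
            push_cast; ring
          rwa [hcast]
    apply hR
    refine Set.eq_univ_iff_forall.2 fun x => ?_
    have := hnat x.val
    rwa [ZMod.natCast_val, ZMod.cast_id] at this
  obtain ⟨ξ, hξR, hξnR⟩ := hstep
  obtain ⟨bx, hbx, by', hby, az, haz, aw, haw, hzw, hξeq⟩ := hξR
  have hξ0 : ξ ≠ 0 := by
    intro h
    apply hξnR
    rw [h, add_zero]
    exact h1R
  set c : ZMod p := az - aw with hcdef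
  set d : ZMod p := bx - by' with hddef
  have hc : c ≠ 0 := sub_ne_zero.2 hzw
  have hcd : c • (ξ • A₁) = d • A₁ := by
    rw [smul_smul]
    congr 1
    rw [hξeq, hcdef, hddef]
    field_simp
  -- apply different-summands Plünnecke
  have hξA₁ne : (ξ • A₁).Nonempty := Finset.smul_finset_nonempty.2 hA₁ne
  obtain ⟨X, hXA₁, hXne, hX⟩ := my_diff_summands A₁ A₁ (ξ • A₁) hA₁ne hA₁ne hξA₁ne
  -- injectivity lower bound
  have hinj : #X * #A₁ ≤ #(X + A₁ + ξ • A₁) := by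
    rw [← Finset.card_product]
    apply Finset.card_le_card_of_injOn (fun q => q.1 + q.2 + ξ * q.2)
    · rintro ⟨u, z⟩ hq
      simp only [Finset.coe_product, Set.mem_prod, Finset.mem_coe] at hq ⊢
      refine Finset.add_mem_add (Finset.add_mem_add hq.1 hq.2) ?_
      rw [← smul_eq_mul]
      exact Finset.smul_mem_smul_finset hq.2
    · rintro ⟨u, z⟩ hq ⟨u', z'⟩ hq' heq
      simp only [Finset.coe_product, Set.mem_prod, Finset.mem_coe] at hq hq'
      dsimp only at heq
      by_cases hzz : z = z'
      · subst hzz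
        have hu : u = u' := by linear_combination heq
        simp [hu]
      · exfalso
        apply hξnR
        have hz' : z' - z ≠ 0 := sub_ne_zero.2 (Ne.symm hzz)
        refine ⟨u, hXA₁ hq.1, u', hXA₁ hq'.1, z', hq'.2, z, hq.2, Ne.symm hzz, ?_⟩
        rw [eq_div_iff hz']
        linear_combination -heq
  -- G1 : #A₁^3 ≤ 9 * (#(A₁+A₁) * #(A₁ + ξ•A₁))
  have hG1 : #A₁ ^ 3 ≤ 9 * (#(A₁ + A₁) * #(A₁ + ξ • A₁)) := by
    have hX0 : 0 < #X := hXne.card_pos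
    have key : #X * #A₁ ^ 3 ≤ #X * (9 * (#(A₁ + A₁) * #(A₁ + ξ • A₁))) := by
      calc #X * #A₁ ^ 3 = (#X * #A₁) * #A₁ ^ 2 := by ring
      _ ≤ #(X + A₁ + ξ • A₁) * #A₁ ^ 2 := Nat.mul_le_mul_right _ hinj
      _ ≤ 9 * #X * (#(A₁ + A₁) * #(A₁ + ξ • A₁)) := hX
      _ = #X * (9 * (#(A₁ + A₁) * #(A₁ + ξ • A₁))) := by ring
    exact Nat.le_of_mul_le_mul_left key hX0
  -- peel lemmas
  have peel_plus : ∀ (V : Finset (ZMod p)), ∀ e ∈ A₁,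
      #(V + e • A) * N ≤ #(V - b₀ • A) * #(A + A) := by
    intro V e he
    have he0 : e ≠ 0 := fun h => hA0 (h ▸ hA₁A he)
    have hD : N ≤ #(b₀ • A ∩ e • A) := hN e he
    set D := b₀ • A ∩ e • A with hDdef
    have h1 := Finset.ruzsa_triangle_inequality_sub_sub_sub V D (-(e • A))
    rw [sub_neg_eq_add] at h1
    have h2 : #(-(e • A) - D) ≤ #(A + A) := by
      have hE : -(e • A) - D = -((e • A) + D) := by rw [sub_eq_add_neg, ← neg_add]
      rw [hE, Finset.card_neg]
      calc #((e • A) + D)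
          ≤ #((e • A) + e • A) :=
            Finset.card_le_card (Finset.add_subset_add_left Finset.inter_subset_right)
      _ = #(e • (A + A)) := by rw [my_smul_add]
      _ = #(A + A) := my_card_smul he0 _
    have h3 : #(V - D) ≤ #(V - b₀ • A) :=
      Finset.card_le_card (Finset.sub_subset_sub Finset.Subset.rfl Finset.inter_subset_left)
    calc #(V + e • A) * N ≤ #(V + e • A) * #D := Nat.mul_le_mul_left _ hD
    _ ≤ #(V - D) * #(-(e • A) - D) := h1
    _ ≤ #(V - b₀ • A) * #(A + A) := Nat.mul_le_mul h3 h2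
  have peel_minus : ∀ (V : Finset (ZMod p)), ∀ e ∈ A₁,
      #(V - e • A) * N ≤ #(V + b₀ • A) * #(A + A) := by
    intro V e he
    have he0 : e ≠ 0 := fun h => hA0 (h ▸ hA₁A he)
    have hD : N ≤ #(b₀ • A ∩ e • A) := hN e he
    set D := b₀ • A ∩ e • A with hDdef
    have h1 := Finset.ruzsa_triangle_inequality_sub_sub_sub V (-D) (e • A)
    rw [sub_neg_eq_add] at h1
    have hDneg : #(-D : Finset (ZMod p)) = #D := Finset.card_neg _
    rw [hDneg] at h1
    have h2 : #((e • A) - -D) ≤ #(A + A) := by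
      have hE : (e • A) - -D = (e • A) + D := by rw [sub_neg_eq_add]
      rw [hE]
      calc #((e • A) + D)
          ≤ #((e • A) + e • A) :=
            Finset.card_le_card (Finset.add_subset_add_left Finset.inter_subset_right)
      _ = #(e • (A + A)) := by rw [my_smul_add]
      _ = #(A + A) := my_card_smul he0 _
    have h3 : #(V + D) ≤ #(V + b₀ • A) :=
      Finset.card_le_card (Finset.add_subset_add_left Finset.inter_subset_left)
    calc #(V - e • A) * N ≤ #(V - e • A) * #D := Nat.mul_le_mul_left _ hD
    _ ≤ #(V + D) * #((e • A) - -D) := h1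
    _ ≤ #(V + b₀ • A) * #(A + A) := Nat.mul_le_mul h3 h2
  -- the four-dilate superset of A₁ + ξ • A₁
  set Y : Finset (ZMod p) := (az • A - aw • A) + (bx • A - by' • A) with hYdef
  have hq_le : #(A₁ + ξ • A₁) ≤ #Y := by
    have h1 : #(A₁ + ξ • A₁) = #(c • A₁ + d • A₁) := by
      rw [← my_card_smul hc (A₁ + ξ • A₁), my_smul_add, hcd]
    have sub1 : c • A₁ ⊆ az • A - aw • A := by
      intro x hx
      obtain ⟨u, hu, rfl⟩ := Finset.mem_smul_finset.1 hx
      rw [hcdef, sub_smul]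
      exact Finset.sub_mem_sub (Finset.smul_mem_smul_finset (hA₁A hu))
        (Finset.smul_mem_smul_finset (hA₁A hu))
    have sub2 : d • A₁ ⊆ bx • A - by' • A := by
      intro x hx
      obtain ⟨u, hu, rfl⟩ := Finset.mem_smul_finset.1 hx
      rw [hddef, sub_smul]
      exact Finset.sub_mem_sub (Finset.smul_mem_smul_finset (hA₁A hu))
        (Finset.smul_mem_smul_finset (hA₁A hu))
    rw [h1]
    exact Finset.card_le_card (Finset.add_subset_add sub1 sub2)
  -- peeling chain
  set W₁ : Finset (ZMod p) := az • A + (bx • A - by' • A) + b₀ • A with hW₁def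
  set W₂ : Finset (ZMod p) := az • A + bx • A + b₀ • A + b₀ • A with hW₂def
  set W₃ : Finset (ZMod p) := az • A + b₀ • A + b₀ • A - b₀ • A with hW₃def
  set W : Finset (ZMod p) := b₀ • A + b₀ • A - b₀ • A - b₀ • A with hWdef
  have m1 : #Y * N ≤ #W₁ * #(A + A) := by
    have e1 : Y = (az • A + (bx • A - by' • A)) - aw • A := by
      rw [hYdef, sub_add_eq_add_sub]
    rw [e1]
    exact peel_minus _ aw haw
  have m2 : #W₁ * N ≤ #W₂ * #(A + A) := by
    have e1 : W₁ = (az • A + bx • A + b₀ • A) - by' • A := by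
      rw [hW₁def, ← add_sub_assoc, sub_add_eq_add_sub]
    have e2 : (az • A + bx • A + b₀ • A) + b₀ • A = W₂ := by rw [hW₂def]
    rw [e1, ← e2]
    exact peel_minus _ by' hby
  have m3 : #W₂ * N ≤ #W₃ * #(A + A) := by
    have e1 : W₂ = (az • A + b₀ • A + b₀ • A) + bx • A := by
      rw [hW₂def, add_right_comm (az • A) (bx • A) (b₀ • A),
        add_right_comm (az • A + b₀ • A) (bx • A) (b₀ • A)]
    have e2 : (az • A + b₀ • A + b₀ • A) - b₀ • A = W₃ := by rw [hW₃def]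
    rw [e1, ← e2]
    exact peel_plus _ bx hbx
  have m4 : #W₃ * N ≤ #W * #(A + A) := by
    have e1 : W₃ = (b₀ • A + b₀ • A - b₀ • A) + az • A := by
      rw [hW₃def, add_comm (az • A) (b₀ • A), add_right_comm (b₀ • A) (az • A) (b₀ • A),
        sub_add_eq_add_sub]
    have e2 : (b₀ • A + b₀ • A - b₀ • A) - b₀ • A = W := by rw [hWdef]
    rw [e1, ← e2]
    exact peel_plus _ az haz
  have hWcard : #W = #(2 • A - 2 • A) := by
    have e1 : W = b₀ • (A + A - A - A) := by
      rw [hWdef, my_smul_sub, my_smul_sub, my_smul_add]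
    have e2 : A + A - A - A = 2 • A - 2 • A := by
      rw [sub_sub, ← two_nsmul]
    rw [e1, my_card_smul hb₀0, e2]
  -- Plünnecke-Ruzsa
  have hPR : #(2 • A - 2 • A) * #A ^ 4 ≤ #(A + A) ^ 4 * #A := by
    have h := Finset.pluennecke_ruzsa_inequality_nsmul_sub_nsmul_add hAne A 2 2
    have ha0 : (0 : ℚ≥0) < (#A : ℚ≥0) := by exact_mod_cast hAne.card_pos
    have h2 : (#(2 • A - 2 • A) : ℚ≥0) * (#A : ℚ≥0) ^ 4 ≤ (#(A + A) : ℚ≥0) ^ 4 * #A := by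
      calc (#(2 • A - 2 • A) : ℚ≥0) * (#A : ℚ≥0) ^ 4
          ≤ (((#(A + A) : ℚ≥0) / #A) ^ (2 + 2) * #A) * (#A : ℚ≥0) ^ 4 := by
            exact mul_le_mul_of_nonneg_right h (by positivity)
      _ = (#(A + A) : ℚ≥0) ^ 4 * #A := by
            rw [show (2 + 2 : ℕ) = 4 from rfl, div_pow]
            field_simp
    exact_mod_cast h2
  -- combine chain : #Y * N^4 ≤ #W * s^4
  have hchain : #Y * N ^ 4 ≤ #W * #(A + A) ^ 4 := by
    set s := #(A + A)
    calc #Y * N ^ 4 = (#Y * N) * N ^ 3 := by ring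
    _ ≤ (#W₁ * s) * N ^ 3 := Nat.mul_le_mul_right _ m1
    _ = (#W₁ * N) * (N ^ 2 * s) := by ring
    _ ≤ (#W₂ * s) * (N ^ 2 * s) := Nat.mul_le_mul_right _ m2
    _ = (#W₂ * N) * (N * s ^ 2) := by ring
    _ ≤ (#W₃ * s) * (N * s ^ 2) := Nat.mul_le_mul_right _ m3
    _ = (#W₃ * N) * s ^ 3 := by ring
    _ ≤ (#W * s) * s ^ 3 := Nat.mul_le_mul_right _ m4
    _ = #W * s ^ 4 := by ring
  -- assemble in ℕ
  have main : #A₁ ^ 3 * N ^ 4 * #A ^ 4 ≤ 9 * #(A + A) ^ 9 * #A := by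
    set s := #(A + A) with hsdef
    set q := #(A₁ + ξ • A₁) with hqdef
    set w := #(2 • A - 2 • A) with hwdef
    have hA₁A₁ : #(A₁ + A₁) ≤ s := Finset.card_le_card (Finset.add_subset_add hA₁A hA₁A)
    have F1 : #A₁ ^ 3 ≤ 9 * s * q := by
      calc #A₁ ^ 3 ≤ 9 * (#(A₁ + A₁) * q) := hG1
      _ ≤ 9 * (s * q) := Nat.mul_le_mul_left _ (Nat.mul_le_mul_right _ hA₁A₁)
      _ = 9 * s * q := by ring
    have F2 : q * N ^ 4 ≤ w * s ^ 4 := by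
      calc q * N ^ 4 ≤ #Y * N ^ 4 := Nat.mul_le_mul_right _ hq_le
      _ ≤ #W * s ^ 4 := hchain
      _ = w * s ^ 4 := by rw [hWcard]
    calc #A₁ ^ 3 * N ^ 4 * #A ^ 4 ≤ (9 * s * q) * N ^ 4 * #A ^ 4 := by
          exact Nat.mul_le_mul_right _ (Nat.mul_le_mul_right _ F1)
    _ = (9 * s) * (q * N ^ 4) * #A ^ 4 := by ring
    _ ≤ (9 * s) * (w * s ^ 4) * #A ^ 4 := by
          exact Nat.mul_le_mul_right _ (Nat.mul_le_mul_left _ F2)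
    _ = (9 * s ^ 5) * (w * #A ^ 4) := by ring
    _ ≤ (9 * s ^ 5) * (s ^ 4 * #A) := Nat.mul_le_mul_left _ hPR
    _ = 9 * s ^ 9 * #A := by ring
  -- cast to ℝ
  have haR : (0 : ℝ) < (#A : ℝ) := by exact_mod_cast hAne.card_pos
  have hcast : ((#A₁ : ℝ) ^ 3 * (N : ℝ) ^ 4 * (#A : ℝ) ^ 3) * (#A : ℝ) ≤ (9 * (#(A + A) : ℝ) ^ 9) * #A := by
    have h := (Nat.cast_le (α := ℝ)).2 main
    push_cast at h
    calc ((#A₁ : ℝ) ^ 3 * (N : ℝ) ^ 4 * (#A : ℝ) ^ 3) * (#A : ℝ)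
        = (#A₁ : ℝ) ^ 3 * (N : ℝ) ^ 4 * (#A : ℝ) ^ 4 := by ring
    _ ≤ 9 * (#(A + A) : ℝ) ^ 9 * #A := h
  exact le_of_mul_le_mul_right hcast haR
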